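/- Let $V_1, \ldots, V_n$ be finite nonempty sets of Euclidean unit vectors in $\mathbb{R}^d$ such that $0 \in \mathrm{conv}(V_i)$ for every $i \in [n]$. Then there exists a selection $v_i \in V_i$ for each $i$ such that $\|v_1 + \cdots + v_n\|_2 \geq \sqrt{n}$. -/

import Mathlib

open scoped RealInnerProductSpace

lemma exists_nonneg_inner {d : ℕ} (s : EuclideanSpace ℝ (Fin d))
    (V : Finset (EuclideanSpace ℝ (Fin d)))
    (h0 : (0 : EuclideanSpace ℝ (Fin d)) ∈ convexHull ℝ (V : Set (EuclideanSpace ℝ (Fin d)))) :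
    ∃ v ∈ V, 0 ≤ ⟪s, v⟫ := by
  by_contra h
  push_neg at h
  have hlin : IsLinearMap ℝ (fun x : EuclideanSpace ℝ (Fin d) => ⟪s, x⟫) :=
    ⟨fun a b => inner_add_right s a b, fun c a => real_inner_smul_right s a c⟩
  have hconv : Convex ℝ {x : EuclideanSpace ℝ (Fin d) | ⟪s, x⟫ < 0} :=
    convex_halfSpace_lt hlin 0
  have hsub : (V : Set (EuclideanSpace ℝ (Fin d))) ⊆ {x | ⟪s, x⟫ < 0} :=
    fun x hx => h x hx
  have := convexHull_min hsub hconv h0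
  simpa using this

lemma aux_anti_balancing (d : ℕ) :
    ∀ n (V : Fin n → Finset (EuclideanSpace ℝ (Fin d))),
    (∀ i, (V i).Nonempty) →
    (∀ i, ∀ v ∈ V i, ‖v‖ = 1) →
    (∀ i, (0 : EuclideanSpace ℝ (Fin d)) ∈
      convexHull ℝ (V i : Set (EuclideanSpace ℝ (Fin d)))) →
    ∃ v : Fin n → EuclideanSpace ℝ (Fin d),
      (∀ i, v i ∈ V i) ∧ (n : ℝ) ≤ ‖∑ i, v i‖ ^ 2 := by
  intro n
  induction n with
  | zero => exact fun V _ _ _ => ⟨fun i => i.elim0, fun i => i.elim0, by simp⟩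
  | succ n ih =>
    intro V hne hunit h0
    obtain ⟨v', hv', hn'⟩ := ih (fun i => V i.castSucc) (fun i => hne _)
      (fun i => hunit _) (fun i => h0 _)
    set s := ∑ i, v' i with hs
    obtain ⟨w, hw, hsw⟩ := exists_nonneg_inner s (V (Fin.last n)) (h0 _)
    refine ⟨Fin.snoc v' w, ?_, ?_⟩
    · intro i
      refine Fin.lastCases ?_ ?_ i
      · simpa using hw
      · intro j; simpa using hv' j
    · rw [Fin.sum_univ_castSucc]
      simp only [Fin.snoc_castSucc, Fin.snoc_last]
      rw [norm_add_sq_real]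
      have h1 : ‖w‖ = 1 := hunit _ _ hw
      push_cast
      rw [← hs]
      nlinarith [hn', hsw]

theorem anti_balancing_unit_vectors (d n : ℕ)
    (V : Fin n → Finset (EuclideanSpace ℝ (Fin d)))
    (hne : ∀ i, (V i).Nonempty)
    (hunit : ∀ i, ∀ v ∈ V i, ‖v‖ = 1)
    (h0 : ∀ i, (0 : EuclideanSpace ℝ (Fin d)) ∈
      convexHull ℝ (V i : Set (EuclideanSpace ℝ (Fin d)))) :
    ∃ v : Fin n → EuclideanSpace ℝ (Fin d),
      (∀ i, v i ∈ V i) ∧ Real.sqrt n ≤ ‖∑ i, v i‖ := by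
  obtain ⟨v, hv, hn⟩ := aux_anti_balancing d n V hne hunit h0
  refine ⟨v, hv, ?_⟩
  have := Real.sqrt_le_sqrt hn
  rwa [Real.sqrt_sq (norm_nonneg _)] at this
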